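/- Let G=(V,E) be a finite directed acyclic graph with source node r and at least two vertices, let c : E → ℝ with c_e ≥ 0 be edge capacities, and let S ⊆ {0,1}^E be a finite nonempty activation set. Let s : ℕ → S be any sequence of activation vectors and let R : V → ℕ → ℝ be nonnegative functions satisfying the cut-set bound R_i(T) ≤ Σ_{t=0}^{T−1} Σ_{e∈E_U} c_e·s_e(t) for every proper cut U, every i ∉ U, and every T ≥ 1. Then min_{i∈V} liminf_{T→∞} R_i(T)/T ≤ max_{β∈conv(S)} min_{v≠r} Σ_{e∈δ_in(v)} c_e·β_e =: λ_DAG. -/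

import Mathlib

open Filter Finset
open Topology

set_option maxHeartbeats 1000000 in
/-- Theorem 1 combined with equation (15) of the paper: for a wireless DAG, the
minimum long-run reception rate of any policy is at most
λ_DAG = max_{β∈conv(S)} min_{v≠r} Σ_{e∈δ_in(v)} c_e β_e. -/
theorem stmt_13 {V : Type*} [Fintype V] [DecidableEq V] (r : V)
    (hV : 2 ≤ Fintype.card V)
    (E : Finset (V × V))
    (hacyc : ∀ v : V, ¬ Relation.TransGen (fun a b : V => (a, b) ∈ E) v v)
    (c : V × V → ℝ) (hc : ∀ e, 0 ≤ c e)
    (S : Finset ((V × V) → ℝ)) (hS : S.Nonempty)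
    (hSbin : ∀ s ∈ S, ∀ e, s e = 0 ∨ s e = 1)
    (s : ℕ → (V × V) → ℝ) (hs : ∀ t, s t ∈ S)
    (R : V → ℕ → ℝ) (hR : ∀ i T, 0 ≤ R i T)
    (hcut : ∀ U : Finset V, r ∈ U → U ≠ Finset.univ →
      ∀ i ∉ U, ∀ T : ℕ, 1 ≤ T →
        R i T ≤ ∑ t ∈ Finset.range T,
          ∑ e ∈ E.filter (fun e => e.1 ∈ U ∧ e.2 ∉ U), c e * s t e) :
    sInf {x : ℝ | ∃ i : V, x = liminf (fun T : ℕ => R i T / T) atTop} ≤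
      sSup {x : ℝ | ∃ β ∈ convexHull ℝ (S : Set ((V × V) → ℝ)),
        x = sInf {y : ℝ | ∃ v : V, v ≠ r ∧
          y = ∑ e ∈ E.filter (fun e => e.2 = v), c e * β e}} := by
  classical
  -- no self-loops
  have hloop : ∀ v : V, (v, v) ∉ E := fun v hv =>
    hacyc v (Relation.TransGen.single hv)
  -- convex hull lies in the unit box
  have hbox : (convexHull ℝ (S : Set ((V × V) → ℝ))) ⊆
      Set.pi Set.univ (fun _ : V × V => Set.Icc (0:ℝ) 1) := by
    apply convexHull_min
    · intro g hg e _
      rcases hSbin g hg e with h | h <;> simp [h]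
    · exact convex_pi fun _ _ => convex_Icc 0 1
  -- averages of the activation sequence
  set A : ℕ → (V × V) → ℝ := fun n => ∑ t ∈ Finset.range (n+1), ((n+1 : ℕ) : ℝ)⁻¹ • s t with hA
  have hAmem : ∀ n, A n ∈ convexHull ℝ (S : Set ((V × V) → ℝ)) := by
    intro n
    apply (convex_convexHull ℝ _).sum_mem
    · intro t _; positivity
    · rw [Finset.sum_const, Finset.card_range, nsmul_eq_mul]
      rw [mul_inv_cancel₀]
      positivity
    · intro t _; exact subset_convexHull ℝ _ (hs t)
  have hAe : ∀ n e, A n e = ((n+1 : ℕ) : ℝ)⁻¹ * ∑ t ∈ Finset.range (n+1), s t e := by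
    intro n e
    simp only [hA, Finset.sum_apply, Pi.smul_apply, smul_eq_mul, Finset.mul_sum]
  -- a convergent subsequence of averages
  obtain ⟨β, hβmem, φ, hφ, hβlim⟩ :=
    (S.finite_toSet.isCompact_convexHull (𝕜 := ℝ)).tendsto_subseq hAmem
  -- the edge-filter for a vertex cut
  have hfilter : ∀ v : V, v ≠ r →
      E.filter (fun e => e.1 ∈ Finset.univ.erase v ∧ e.2 ∉ Finset.univ.erase v)
        = E.filter (fun e => e.2 = v) := by
    intro v hv
    ext e
    simp only [Finset.mem_filter, Finset.mem_erase, Finset.mem_univ, and_true, not_and, not_not]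
    constructor
    · rintro ⟨he, h1, h2⟩
      exact ⟨he, by simpa using h2⟩
    · rintro ⟨he, h2⟩
      refine ⟨he, ?_, by simp [h2]⟩
      intro h1
      apply hloop v
      have : e = (v, v) := by
        rcases e with ⟨a, b⟩
        simp_all
      rwa [this] at he
  -- the per-time-horizon bound
  have hkey : ∀ v : V, v ≠ r → ∀ n : ℕ,
      R v (n+1) / ((n+1 : ℕ) : ℝ) ≤ ∑ e ∈ E.filter (fun e => e.2 = v), c e * A n e := by
    intro v hv n
    have hrU : r ∈ Finset.univ.erase v := by
      simp [Ne.symm hv]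
    have hUne : Finset.univ.erase v ≠ Finset.univ := by
      intro h
      have hv' : v ∈ Finset.univ.erase v := by rw [h]; exact Finset.mem_univ v
      simp at hv'
    have hvU : v ∉ Finset.univ.erase v := by simp
    have hb := hcut (Finset.univ.erase v) hrU hUne v hvU (n+1) (Nat.le_add_left 1 n)
    rw [hfilter v hv] at hb
    have hpos : (0 : ℝ) < ((n+1 : ℕ) : ℝ) := by positivity
    rw [div_le_iff₀ hpos]
    calc R v (n+1) ≤ ∑ t ∈ Finset.range (n+1),
          ∑ e ∈ E.filter (fun e => e.2 = v), c e * s t e := hb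
      _ = (∑ e ∈ E.filter (fun e => e.2 = v), c e * A n e) * ((n+1 : ℕ) : ℝ) := by
          rw [Finset.sum_comm, Finset.sum_mul]
          refine Finset.sum_congr rfl fun e _ => ?_
          rw [hAe n e, ← Finset.mul_sum]
          field_simp
  -- pick a vertex different from r
  obtain ⟨v0, hv0⟩ := Fintype.exists_ne_of_one_lt_card (by omega) r
  -- value at the limit point
  set f : V → ℝ := fun v => ∑ e ∈ E.filter (fun e => e.2 = v), c e * β e with hf
  -- liminf bound for each v ≠ r
  have hliminf : ∀ v : V, v ≠ r →
      liminf (fun T : ℕ => R v T / T) atTop ≤ f v := by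
    intro v hv
    have hbdd : IsBoundedUnder (· ≥ ·) atTop (fun T : ℕ => R v T / T) :=
      isBoundedUnder_of ⟨0, fun T => div_nonneg (hR v T) (by positivity)⟩
    have hcont : Tendsto (fun k => ∑ e ∈ E.filter (fun e => e.2 = v), c e * A (φ k) e)
        atTop (𝓝 (f v)) := by
      apply tendsto_finset_sum
      intro e _
      exact ((tendsto_pi_nhds.mp hβlim) e).const_mul (c e)
    by_contra hcon
    push_neg at hcon
    set L := liminf (fun T : ℕ => R v T / T) atTop with hL
    have hε : (0:ℝ) < (L - f v)/2 := by linarith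
    have hfreq : ∃ᶠ T : ℕ in atTop, R v T / T ≤ f v + (L - f v)/2 := by
      have hev : ∀ᶠ k in atTop,
          (∑ e ∈ E.filter (fun e => e.2 = v), c e * A (φ k) e) ≤ f v + (L - f v)/2 := by
        have := hcont.eventually (ge_mem_nhds (by linarith : f v < f v + (L - f v)/2))
        exact this
      have htend : Tendsto (fun k => φ k + 1) atTop atTop :=
        (tendsto_add_atTop_nat 1).comp hφ.tendsto_atTop
      apply htend.frequently
      apply (hev.mono ?_).frequently
      intro k hk
      exact le_trans (hkey v hv (φ k)) hk
    have := liminf_le_of_frequently_le hfreq hbdd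
    rw [← hL] at this
    linarith
  -- pick minimizer over v ≠ r
  have hFne : (Finset.univ.filter (fun v : V => v ≠ r)).Nonempty :=
    ⟨v0, by simp [hv0]⟩
  obtain ⟨vm, hvmF, hvmmin⟩ := Finset.exists_min_image _ f hFne
  have hvm : vm ≠ r := by simpa using hvmF
  -- the inner sInf value for β
  set Y : Set ℝ := {y : ℝ | ∃ v : V, v ≠ r ∧
      y = ∑ e ∈ E.filter (fun e => e.2 = v), c e * β e} with hY
  have hYfin : Y.Finite := by
    have : Y ⊆ f '' Set.univ := by
      rintro y ⟨v, _, rfl⟩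
      exact ⟨v, trivial, rfl⟩
    exact Set.Finite.subset (Set.finite_univ.image f) this
  have hYne : Y.Nonempty := ⟨f v0, v0, hv0, rfl⟩
  have hfvm_le : f vm ≤ sInf Y := by
    apply le_csInf hYne
    rintro y ⟨v, hv, rfl⟩
    exact hvmmin v (by simp [hv])
  -- membership of sInf Y in the RHS set
  have hmemR : sInf Y ∈ {x : ℝ | ∃ β ∈ convexHull ℝ (S : Set ((V × V) → ℝ)),
      x = sInf {y : ℝ | ∃ v : V, v ≠ r ∧
        y = ∑ e ∈ E.filter (fun e => e.2 = v), c e * β e}} :=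
    ⟨β, hβmem, rfl⟩
  -- RHS set is bounded above
  have hbddR : BddAbove {x : ℝ | ∃ β ∈ convexHull ℝ (S : Set ((V × V) → ℝ)),
      x = sInf {y : ℝ | ∃ v : V, v ≠ r ∧
        y = ∑ e ∈ E.filter (fun e => e.2 = v), c e * β e}} := by
    refine ⟨∑ e ∈ E, c e, ?_⟩
    rintro x ⟨β', hβ', rfl⟩
    have hβbox := hbox hβ'
    have hval : ∀ v : V, (∑ e ∈ E.filter (fun e => e.2 = v), c e * β' e) ≤ ∑ e ∈ E, c e := by
      intro v
      calc (∑ e ∈ E.filter (fun e => e.2 = v), c e * β' e)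
          ≤ ∑ e ∈ E.filter (fun e => e.2 = v), c e := by
            apply Finset.sum_le_sum
            intro e _
            have h01 := hβbox e (Set.mem_univ e)
            nlinarith [h01.1, h01.2, hc e]
        _ ≤ ∑ e ∈ E, c e :=
            Finset.sum_le_sum_of_subset_of_nonneg (Finset.filter_subset _ _)
              (fun e _ _ => hc e)
    have hne' : {y : ℝ | ∃ v : V, v ≠ r ∧
        y = ∑ e ∈ E.filter (fun e => e.2 = v), c e * β' e}.Nonempty :=
      ⟨_, v0, hv0, rfl⟩
    have hbb : BddBelow {y : ℝ | ∃ v : V, v ≠ r ∧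
        y = ∑ e ∈ E.filter (fun e => e.2 = v), c e * β' e} := by
      apply Set.Finite.bddBelow
      have : {y : ℝ | ∃ v : V, v ≠ r ∧
          y = ∑ e ∈ E.filter (fun e => e.2 = v), c e * β' e}
          ⊆ (fun v => ∑ e ∈ E.filter (fun e => e.2 = v), c e * β' e) '' Set.univ := by
        rintro y ⟨v, _, rfl⟩
        exact ⟨v, trivial, rfl⟩
      exact Set.Finite.subset (Set.finite_univ.image _) this
    exact csInf_le_of_le hbb ⟨v0, hv0, rfl⟩ (hval v0)
  -- LHS set is bounded below by 0
  have hbddL : BddBelow {x : ℝ | ∃ i : V, x = liminf (fun T : ℕ => R i T / T) atTop} := by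
    refine ⟨0, ?_⟩
    rintro x ⟨i, rfl⟩
    rw [liminf_eq]
    by_cases hb : BddAbove {a : ℝ | ∀ᶠ n in atTop, a ≤ R i n / (n : ℝ)}
    · apply le_csSup hb
      exact Filter.Eventually.of_forall fun T => div_nonneg (hR i T) (by positivity)
    · rw [csSup_of_not_bddAbove hb, Real.sSup_empty]
  -- conclude
  calc sInf {x : ℝ | ∃ i : V, x = liminf (fun T : ℕ => R i T / T) atTop}
      ≤ liminf (fun T : ℕ => R vm T / T) atTop := csInf_le hbddL ⟨vm, rfl⟩
    _ ≤ f vm := hliminf vm hvm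
    _ ≤ sInf Y := hfvm_le
    _ ≤ _ := le_csSup hbddR hmemR
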